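/- Let F : ℂ³ → ℝ³ be the Harvey–Lawson map F(z₁,z₂,z₃) = (Im(z₁z₂z₃), |z₁|² − |z₂|², |z₁|² − |z₃|²). The map ι(z₁,z₂,z₃) = (−conj z₁, conj z₂, conj z₃) satisfies F ∘ ι = F and ι ∘ ι = id, and negates the standard symplectic form on ℂ³: ω(ι(u), ι(v)) = −ω(u,v) for all u,v ∈ ℂ³. Hence ι is a fibre-preserving anti-symplectic involution of the Harvey–Lawson fibration. -/

import Mathlib

/-- The Harvey–Lawson map `F(z) = (Im(z₁z₂z₃), |z₁|² − |z₂|², |z₁|² − |z₃|²)`. -/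
noncomputable def F12 (z : ℂ × ℂ × ℂ) : ℝ × ℝ × ℝ :=
  ((z.1 * z.2.1 * z.2.2).im,
    ‖z.1‖ ^ 2 - ‖z.2.1‖ ^ 2,
    ‖z.1‖ ^ 2 - ‖z.2.2‖ ^ 2)

/-- The map `ι(z₁,z₂,z₃) = (−conj z₁, conj z₂, conj z₃)`. -/
def iota13 (z : ℂ × ℂ × ℂ) : ℂ × ℂ × ℂ :=
  (-(starRingEnd ℂ) z.1, (starRingEnd ℂ) z.2.1, (starRingEnd ℂ) z.2.2)

/-- The standard symplectic form on `ℂ³`: `ω(u,v) = ∑ⱼ Im(conj uⱼ · vⱼ)`. -/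
def omega3 (u v : ℂ × ℂ × ℂ) : ℝ :=
  ((starRingEnd ℂ) u.1 * v.1).im + ((starRingEnd ℂ) u.2.1 * v.2.1).im +
    ((starRingEnd ℂ) u.2.2 * v.2.2).im

/-- `ι` is a fibre-preserving anti-symplectic involution of the Harvey–Lawson
fibration. -/
theorem stmt13 :
    (∀ z : ℂ × ℂ × ℂ, F12 (iota13 z) = F12 z) ∧
    (∀ z : ℂ × ℂ × ℂ, iota13 (iota13 z) = z) ∧
    (∀ u v : ℂ × ℂ × ℂ, omega3 (iota13 u) (iota13 v) = - omega3 u v) := by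
  refine ⟨fun z => ?_, fun z => ?_, fun u v => ?_⟩
  · simp only [F12, iota13]
    refine Prod.ext ?_ (Prod.ext ?_ ?_) <;> simp [← map_mul, Complex.conj_im] <;> ring
  · simp [iota13]
  · simp only [omega3, iota13, map_neg, map_mul, Complex.conj_conj, neg_mul,
      Complex.neg_im, Complex.neg_re, Complex.mul_im, Complex.conj_re, Complex.conj_im]
    ring
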